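/- Let T be a rooted tree of size n with heavy path decomposition, and let m ≥ 1. Then ∑_{H : heavy path of T with n_H ≥ m} n_H ≤ n * (log₂(n/m) + 1), where n_H denotes the size of the subtree rooted at the top node of heavy path H. -/

import Mathlib

open scoped Classical
open Finset

/-- A rooted tree on `n` nodes, given by a parent function, together with a choice
of heavy child (heavy path decomposition). The `rank` function witnesses acyclicity. -/
structure HPTree (n : ℕ) where
  parent : Fin n → Fin n
  root : Fin n
  parent_root : parent root = root
  rank : Fin n → ℕ
  rank_lt : ∀ v, v ≠ root → rank (parent v) < rank v
  heavyChild : Fin n → Option (Fin n)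

namespace HPTree

variable {n : ℕ}

/-- `v` is an ancestor of `u` (every node is an ancestor of itself). -/
def isAnc (T : HPTree n) (v u : Fin n) : Prop := ∃ k, T.parent^[k] u = v

/-- The number of nodes in the subtree rooted at `v`. -/
noncomputable def subtreeSize (T : HPTree n) (v : Fin n) : ℕ :=
  (univ.filter fun u => T.isAnc v u).card

/-- `c` is a child of `v`. -/
def isChild (T : HPTree n) (c v : Fin n) : Prop := T.parent c = v ∧ c ≠ v

/-- The designated heavy child of every node is a child whose subtree size is
maximal among the children, and every node with at least one child has one. -/
def heavyValid (T : HPTree n) : Prop :=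
  (∀ v c, T.heavyChild v = some c → T.isChild c v ∧
    ∀ c', T.isChild c' v → T.subtreeSize c' ≤ T.subtreeSize c) ∧
  (∀ v c', T.isChild c' v → ∃ c, T.heavyChild v = some c)

/-- A node is light if it is the root or is not the heavy child of its parent. -/
def isLight (T : HPTree n) (v : Fin n) : Prop :=
  v = T.root ∨ T.heavyChild (T.parent v) ≠ some v

/-- The number of light ancestors of `u` (including `u` itself). -/
noncomputable def ldepth (T : HPTree n) (u : Fin n) : ℕ :=
  (univ.filter fun v => T.isAnc v u ∧ T.isLight v).card

end HPTree

namespace HPTree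

variable {n : ℕ}

-- auxiliary lemmas

lemma rank_iterate_le (T : HPTree n) : ∀ (k : ℕ) (u : Fin n),
    T.rank (T.parent^[k] u) ≤ T.rank u := by
  intro k
  induction k with
  | zero => intro u; simp
  | succ k ih =>
    intro u
    rw [Function.iterate_succ_apply']
    by_cases hw : T.parent^[k] u = T.root
    · rw [hw, T.parent_root, ← hw]; exact ih u
    · exact le_trans (le_of_lt (T.rank_lt _ hw)) (ih u)

lemma rank_iterate_lt (T : HPTree n) : ∀ (k : ℕ) (u : Fin n),
    T.parent^[k] u ≠ u → T.rank (T.parent^[k] u) < T.rank u := by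
  intro k
  induction k with
  | zero => intro u h; simp at h
  | succ k ih =>
    intro u h
    rw [Function.iterate_succ_apply'] at h ⊢
    by_cases hw : T.parent^[k] u = T.root
    · rw [hw, T.parent_root, ← hw] at h ⊢; exact ih u h
    · exact lt_of_lt_of_le (T.rank_lt _ hw) (T.rank_iterate_le k u)

lemma anc_refl (T : HPTree n) (u : Fin n) : T.isAnc u u := ⟨0, rfl⟩

lemma anc_rank_lt (T : HPTree n) {v u : Fin n} (h : T.isAnc v u) (hne : v ≠ u) :
    T.rank v < T.rank u := by
  obtain ⟨k, rfl⟩ := h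
  exact T.rank_iterate_lt k u hne

lemma anc_antisymm (T : HPTree n) {v u : Fin n} (h : T.isAnc v u) (h' : T.isAnc u v) :
    v = u := by
  by_contra hne
  exact absurd (T.anc_rank_lt h' (Ne.symm hne)) (not_lt.mpr (le_of_lt (T.anc_rank_lt h hne)))

lemma anc_trans (T : HPTree n) {v w u : Fin n} (h : T.isAnc v w) (h' : T.isAnc w u) :
    T.isAnc v u := by
  obtain ⟨k, rfl⟩ := h
  obtain ⟨j, rfl⟩ := h'
  exact ⟨k + j, (Function.iterate_add_apply _ k j u)⟩

lemma anc_total (T : HPTree n) {v w u : Fin n} (h : T.isAnc v u) (h' : T.isAnc w u) :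
    T.isAnc v w ∨ T.isAnc w v := by
  obtain ⟨k, rfl⟩ := h
  obtain ⟨j, rfl⟩ := h'
  rcases le_total k j with hkj | hkj
  · right
    exact ⟨j - k, by rw [← Function.iterate_add_apply, Nat.sub_add_cancel hkj]⟩
  · left
    exact ⟨k - j, by rw [← Function.iterate_add_apply, Nat.sub_add_cancel hkj]⟩

lemma anc_parent (T : HPTree n) (v : Fin n) : T.isAnc (T.parent v) v := ⟨1, rfl⟩

lemma anc_root_eq (T : HPTree n) {w : Fin n} (h : T.isAnc w T.root) : w = T.root := by
  obtain ⟨k, rfl⟩ := h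
  exact Function.iterate_fixed T.parent_root k

lemma subtree_mono (T : HPTree n) {v w : Fin n} (h : T.isAnc w v) :
    T.subtreeSize v ≤ T.subtreeSize w := by
  apply Finset.card_le_card
  intro u hu
  simp only [mem_filter, mem_univ, true_and] at hu ⊢
  exact T.anc_trans h hu

lemma subtree_le (T : HPTree n) (v : Fin n) : T.subtreeSize v ≤ n := by
  simpa [subtreeSize] using Finset.card_le_card (Finset.filter_subset _ (univ : Finset (Fin n)))

/-- Doubling: if `v` is light and `w` is a strict ancestor of `v`, then
`2 * size v ≤ size w`. -/
lemma doubling (T : HPTree n) (hT : T.heavyValid) {v w : Fin n}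
    (hl : T.isLight v) (h : T.isAnc w v) (hne : w ≠ v) :
    2 * T.subtreeSize v ≤ T.subtreeSize w := by
  have hvroot : v ≠ T.root := by
    rintro rfl
    exact hne (T.anc_root_eq h)
  have hvp : v ≠ T.parent v := by
    intro hv
    exact absurd (T.rank_lt v hvroot) (by rw [← hv]; exact lt_irrefl _)
  have hchild : T.isChild v (T.parent v) := ⟨rfl, hvp⟩
  obtain ⟨c, hc⟩ := hT.2 (T.parent v) v hchild
  obtain ⟨hcchild, hcmax⟩ := hT.1 _ _ hc
  have hsz : T.subtreeSize v ≤ T.subtreeSize c := hcmax v hchild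
  have hcv : c ≠ v := by
    rintro rfl
    rcases hl with h1 | h2
    · exact hvroot h1
    · exact h2 hc
  -- disjointness of subtrees of c and v
  have hdisj : Disjoint (univ.filter fun u => T.isAnc c u)
      (univ.filter fun u => T.isAnc v u) := by
    rw [Finset.disjoint_left]
    intro u huc huv
    simp only [mem_filter, mem_univ, true_and] at huc huv
    rcases T.anc_total huc huv with hcv' | hvc'
    · -- c is an ancestor of v, c ≠ v
      obtain ⟨k, hk⟩ := hcv'
      rcases Nat.eq_zero_or_pos k with rfl | hkpos
      · exact hcv (by simpa using hk.symm)
      · have : T.isAnc c (T.parent v) := by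
          refine ⟨k - 1, ?_⟩
          rw [show T.parent v = T.parent^[1] v from rfl, ← Function.iterate_add_apply,
            Nat.sub_add_cancel hkpos]
          exact hk
        have : c = T.parent v :=
          T.anc_antisymm this ⟨1, hcchild.1⟩
        exact hcchild.2 this
    · obtain ⟨k, hk⟩ := hvc'
      rcases Nat.eq_zero_or_pos k with rfl | hkpos
      · exact hcv (by simpa using hk)
      · have : T.isAnc v (T.parent v) := by
          refine ⟨k - 1, ?_⟩
          rw [← hcchild.1, show T.parent c = T.parent^[1] c from rfl,
            ← Function.iterate_add_apply, Nat.sub_add_cancel hkpos]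
          exact hk
        exact hvp (T.anc_antisymm this (T.anc_parent v))
  -- both subtrees inside subtree of parent v
  have hsub : (univ.filter fun u => T.isAnc c u) ∪ (univ.filter fun u => T.isAnc v u)
      ⊆ univ.filter fun u => T.isAnc (T.parent v) u := by
    intro u hu
    simp only [mem_union, mem_filter, mem_univ, true_and] at hu ⊢
    rcases hu with hu | hu
    · exact T.anc_trans (hcchild.1 ▸ T.anc_parent c) hu
    · exact T.anc_trans (T.anc_parent v) hu
  have h1 : T.subtreeSize c + T.subtreeSize v ≤ T.subtreeSize (T.parent v) := by
    rw [subtreeSize, subtreeSize, subtreeSize, ← Finset.card_union_of_disjoint hdisj]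
    exact Finset.card_le_card hsub
  -- w is an ancestor of parent v
  have hwp : T.isAnc w (T.parent v) := by
    obtain ⟨k, hk⟩ := h
    rcases Nat.eq_zero_or_pos k with rfl | hkpos
    · exact absurd (by simpa using hk) (Ne.symm hne)
    · refine ⟨k - 1, ?_⟩
      rw [show T.parent v = T.parent^[1] v from rfl, ← Function.iterate_add_apply,
        Nat.sub_add_cancel hkpos]
      exact hk
  calc 2 * T.subtreeSize v = T.subtreeSize v + T.subtreeSize v := by ring
    _ ≤ T.subtreeSize c + T.subtreeSize v := by omega
    _ ≤ T.subtreeSize (T.parent v) := h1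
    _ ≤ T.subtreeSize w := T.subtree_mono hwp

/-- Along a chain of light nodes with bottom `b`, the top node's subtree has size
at least `2 ^ (card - 1) * size b`. -/
lemma chain_doubling (T : HPTree n) (hT : T.heavyValid) :
    ∀ (k : ℕ) (S : Finset (Fin n)), S.card ≤ k → ∀ b ∈ S,
      (∀ v ∈ S, T.isLight v) →
      (∀ w ∈ S, T.isAnc w b) →
      ∃ t ∈ S, 2 ^ (S.card - 1) * T.subtreeSize b ≤ T.subtreeSize t := by
  intro k
  induction k with
  | zero =>
    intro S hcard b hb _ _
    rw [Finset.card_eq_zero.mp (Nat.le_zero.mp hcard)] at hb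
    simp at hb
  | succ k ih =>
    intro S hcard b hb hlight hanc
    set S' := S.erase b with hS'
    by_cases hS'e : S' = ∅
    · refine ⟨b, hb, ?_⟩
      have : S = {b} := by
        rcases (Finset.erase_eq_empty_iff S b).mp hS'e with h | h
        · rw [h] at hb; simp at hb
        · exact h
      simp [this]
    · have hS'ne : S'.Nonempty := Finset.nonempty_iff_ne_empty.mpr hS'e
      obtain ⟨b', hb'S', hb'max⟩ := S'.exists_max_image T.rank hS'ne
      have hb'S : b' ∈ S := Finset.mem_of_mem_erase hb'S'
      have hb'b : b' ≠ b := Finset.ne_of_mem_erase hb'S'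
      -- every element of S' is an ancestor of b'
      have hanc' : ∀ w ∈ S', T.isAnc w b' := by
        intro w hw
        have hwS : w ∈ S := Finset.mem_of_mem_erase hw
        rcases T.anc_total (hanc w hwS) (hanc b' hb'S) with h1 | h1
        · exact h1
        · by_cases hwb' : w = b'
          · exact hwb' ▸ T.anc_refl w
          · exact absurd (T.anc_rank_lt h1 (Ne.symm hwb')) (not_lt.mpr (hb'max w hw))
      have hdb : 2 * T.subtreeSize b ≤ T.subtreeSize b' :=
        T.doubling hT (hlight b hb) (hanc b' hb'S) hb'b
      have hcard' : S'.card ≤ k := by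
        have h : S'.card = S.card - 1 := Finset.card_erase_of_mem hb
        omega
      obtain ⟨t, htS', hts⟩ := ih S' hcard' b' hb'S'
        (fun v hv => hlight v (Finset.mem_of_mem_erase hv)) hanc'
      refine ⟨t, Finset.mem_of_mem_erase htS', ?_⟩
      have hc1 : S'.card = S.card - 1 := Finset.card_erase_of_mem hb
      have hc2 : 1 ≤ S'.card := Finset.card_pos.mpr hS'ne
      calc 2 ^ (S.card - 1) * T.subtreeSize b
          = 2 ^ (S'.card - 1) * (2 * T.subtreeSize b) := by
            have h : S.card - 1 = S'.card - 1 + 1 := by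
              rw [← hc1]; exact (Nat.sub_add_cancel hc2).symm
            rw [h, pow_succ]; ring
        _ ≤ 2 ^ (S'.card - 1) * T.subtreeSize b' := Nat.mul_le_mul_left _ hdb
        _ ≤ T.subtreeSize t := hts

end HPTree

/-- Heavy paths are in bijection with light nodes (their top nodes), and
`n_H = |T^{top(H)}|`. The total size of subtrees rooted at light nodes whose
subtree has at least `m` nodes is at most `n (log₂(n/m) + 1)`. -/
theorem sum_big_heavy_paths_le {n : ℕ} (T : HPTree n) (hT : T.heavyValid)
    (m : ℝ) (hm : 1 ≤ m) (hmn : m ≤ (n : ℝ)) :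
    (∑ v ∈ Finset.univ.filter
        (fun v => T.isLight v ∧ m ≤ (T.subtreeSize v : ℝ)), (T.subtreeSize v : ℝ))
      ≤ (n : ℝ) * (Real.logb 2 ((n : ℝ) / m) + 1) := by

  have hm0 : (0:ℝ) < m := lt_of_lt_of_le one_pos hm
  have hB0 : 0 ≤ Real.logb 2 ((n : ℝ) / m) + 1 := by
    have : (0:ℝ) ≤ Real.logb 2 ((n : ℝ) / m) :=
      Real.logb_nonneg one_lt_two ((one_le_div hm0).mpr hmn)
    linarith
  -- per-node bound
  have per_u : ∀ u : Fin n,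
      ((Finset.univ.filter fun v => (T.isLight v ∧ m ≤ (T.subtreeSize v : ℝ))
        ∧ T.isAnc v u).card : ℝ) ≤ Real.logb 2 ((n : ℝ) / m) + 1 := by
    intro u
    set S := Finset.univ.filter fun v => (T.isLight v ∧ m ≤ (T.subtreeSize v : ℝ))
        ∧ T.isAnc v u with hSdef
    rcases Finset.eq_empty_or_nonempty S with hSe | hSne
    · rw [hSe]; simpa using hB0
    · obtain ⟨b, hbS, hbmax⟩ := S.exists_max_image T.rank hSne
      have hmem : ∀ v ∈ S, (T.isLight v ∧ m ≤ (T.subtreeSize v : ℝ)) ∧ T.isAnc v u := by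
        intro v hv
        simpa [hSdef] using hv
      have hanc : ∀ w ∈ S, T.isAnc w b := by
        intro w hw
        rcases T.anc_total (hmem w hw).2 (hmem b hbS).2 with h1 | h1
        · exact h1
        · by_cases hwb : w = b
          · exact hwb ▸ T.anc_refl w
          · exact absurd (T.anc_rank_lt h1 (Ne.symm hwb)) (not_lt.mpr (hbmax w hw))
      obtain ⟨t, htS, hts⟩ := T.chain_doubling hT S.card S le_rfl b hbS
        (fun v hv => (hmem v hv).1.1) hanc
      have htn : T.subtreeSize t ≤ n := T.subtree_le t
      have hmb : m ≤ (T.subtreeSize b : ℝ) := (hmem b hbS).1.2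
      have hkey : (2:ℝ) ^ (S.card - 1) * m ≤ (n : ℝ) := by
        calc (2:ℝ) ^ (S.card - 1) * m
            ≤ (2:ℝ) ^ (S.card - 1) * (T.subtreeSize b : ℝ) := by
              apply mul_le_mul_of_nonneg_left hmb (by positivity)
          _ = ((2 ^ (S.card - 1) * T.subtreeSize b : ℕ) : ℝ) := by push_cast; ring
          _ ≤ ((T.subtreeSize t : ℕ) : ℝ) := by exact_mod_cast hts
          _ ≤ (n : ℝ) := by exact_mod_cast htn
      have h2 : (2:ℝ) ^ (S.card - 1) ≤ (n:ℝ) / m := (le_div_iff₀ hm0).mpr hkey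
      have h3 : ((S.card - 1 : ℕ) : ℝ) ≤ Real.logb 2 ((n : ℝ) / m) := by
        have := Real.logb_le_logb_of_le one_lt_two (by positivity :
          (0:ℝ) < (2:ℝ) ^ (S.card - 1)) h2
        rwa [Real.logb_pow, Real.logb_self_eq_one one_lt_two, mul_one] at this
      have hc1 : 1 ≤ S.card := Finset.card_pos.mpr hSne
      have : ((S.card : ℕ) : ℝ) = ((S.card - 1 : ℕ) : ℝ) + 1 := by
        push_cast [Nat.cast_sub hc1]; ring
      rw [this]
      linarith
  -- swap the sum
  set A := Finset.univ.filter fun v => T.isLight v ∧ m ≤ (T.subtreeSize v : ℝ) with hA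
  calc (∑ v ∈ A, (T.subtreeSize v : ℝ))
      = ∑ v ∈ A, ∑ u : Fin n, (if T.isAnc v u then (1:ℝ) else 0) := by
        apply Finset.sum_congr rfl
        intro v _
        rw [Finset.sum_boole]
        simp [HPTree.subtreeSize]
    _ = ∑ u : Fin n, ∑ v ∈ A, (if T.isAnc v u then (1:ℝ) else 0) := Finset.sum_comm
    _ = ∑ u : Fin n, ((A.filter fun v => T.isAnc v u).card : ℝ) := by
        apply Finset.sum_congr rfl
        intro u _
        rw [Finset.sum_boole]
    _ ≤ ∑ _u : Fin n, (Real.logb 2 ((n : ℝ) / m) + 1) := by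
        apply Finset.sum_le_sum
        intro u _
        rw [hA, Finset.filter_filter]
        exact per_u u
    _ = (n : ℝ) * (Real.logb 2 ((n : ℝ) / m) + 1) := by
        rw [Finset.sum_const, Finset.card_univ, Fintype.card_fin, nsmul_eq_mul]
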